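/- The discriminant criterion for the deformed Hesse family: the polynomial (in λ) q_t(λ) = (t^3 + 9λt + 54)(λ^2 t^2 + 4λ^3 − 4t^3 − 18λt − 27) has a repeated root (over ℂ) if and only if (5t^3 − 864)(t^3 − 27) = 0, for t ≠ 0. -/

import Mathlib

open Polynomial

set_option maxHeartbeats 2000000

theorem stmt_18 (t : ℂ) (ht : t ≠ 0)
    (q : Polynomial ℂ)
    (hq : q = (C (t ^ 3 + 54) + C (9 * t) * X) *
      (C 4 * X ^ 3 + C (t ^ 2) * X ^ 2 - C (18 * t) * X - C (4 * t ^ 3 + 27))) :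
    (∃ α : ℂ, q.eval α = 0 ∧ (Polynomial.derivative q).eval α = 0) ↔
      (5 * t ^ 3 - 864) * (t ^ 3 - 27) = 0 := by
  subst hq
  constructor
  · rintro ⟨α, h1, h2⟩
    simp only [derivative_mul, derivative_add, derivative_sub, derivative_C_mul,
      derivative_C, derivative_X, derivative_X_pow, eval_add, eval_sub, eval_mul,
      eval_pow, eval_C, eval_X, eval_natCast, eval_zero, eval_one] at h1 h2
    norm_num at h2
    have key : (8:ℂ) * (5*t^3-864)^2 * (t^3-27)^5 = 0 := by
      linear_combination
        ((58773123072:ℂ) + (27277803648:ℂ)*t^3 + (-520890912:ℂ)*t^6 + (29849634:ℂ)*t^9 + (62505:ℂ)*t^12 + (-50:ℂ)*t^15 + (-32651735040:ℂ)*t^1*α^1 + (-211631616:ℂ)*t^4*α^1 + (34012224:ℂ)*t^7*α^1 + (-1941408:ℂ)*t^10*α^1 + (-975:ℂ)*t^13*α^1 + (-10158317568:ℂ)*t^2*α^2 + (10077696:ℂ)*t^5*α^2 + (-11850624:ℂ)*t^8*α^2 + (-3600:ℂ)*t^11*α^2) * h1 +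
        ((-58364976384:ℂ)*t^2 + (-1308998232:ℂ)*t^5 + (-10733796:ℂ)*t^8 + (-2742336:ℂ)*t^11 + (-2625:ℂ)*t^14 + (-19591041024:ℂ)*α^1 + (-11858928768:ℂ)*t^3*α^1 + (81251424:ℂ)*t^6*α^1 + (-14332626:ℂ)*t^9*α^1 + (-4815:ℂ)*t^12*α^1 + (25:ℂ)*t^15*α^1 + (11972302848:ℂ)*t^1*α^2 + (278396352:ℂ)*t^4*α^2 + (-4286520:ℂ)*t^7*α^2 + (754164:ℂ)*t^10*α^2 + (325:ℂ)*t^13*α^2 + (2539579392:ℂ)*t^2*α^3 + (-2519424:ℂ)*t^5*α^3 + (2962656:ℂ)*t^8*α^3 + (900:ℂ)*t^11*α^3) * h2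
    rcases mul_eq_zero.1 key with h | h
    · rcases mul_eq_zero.1 h with h8 | h
      · norm_num at h8
      · have := pow_eq_zero_iff (n := 2) (two_ne_zero) |>.1 h
        rw [this]; ring
    · have := pow_eq_zero_iff (n := 5) (by norm_num) |>.1 h
      rw [this]; ring

  · intro h
    have h9 : (9:ℂ)*t ≠ 0 := by simpa using ht
    refine ⟨-(t^3+54)/(9*t), ?_, ?_⟩
    · simp only [eval_add, eval_sub, eval_mul, eval_pow, eval_C, eval_X]
      field_simp
      linear_combination (0:ℂ) * h
    · simp only [derivative_mul, derivative_add, derivative_sub, derivative_C_mul,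
        derivative_C, derivative_X, derivative_X_pow, eval_add, eval_sub, eval_mul,
        eval_pow, eval_C, eval_X, eval_natCast, eval_zero, eval_one]
      norm_num
      field_simp
      linear_combination ((t:ℂ)^3 - 27) * h
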